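/- Let (S,*,n) be a symmetric composition algebra over a field k and let S = ⊕_{g∈G} S_g be a grading of S by a group G. Then: (a) for any g, h ∈ G, the polar form satisfies n(S_g, S_h) = 0 unless h = g⁻¹; and (b) any two elements g, h ∈ G with S_g ≠ 0 and S_h ≠ 0 commute in G. In particular, if G is generated by the support of the grading, then G is abelian. -/

import Mathlib

open QuadraticMap

/-- In a group-graded symmetric composition algebra, homogeneous
components of degrees `g`, `h` are orthogonal unless `h = g⁻¹`; any two elements
of the support commute; in particular if the support generates `G` then `G` is
abelian. -/
theorem graded_symmetric_composition_support_commutes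
    {k : Type*} [Field k] {S : Type*} [AddCommGroup S] [Module k S]
    (mul : S →ₗ[k] S →ₗ[k] S) (n : QuadraticForm k S)
    (hnondeg : ∀ x : S, (∀ y : S, polar n x y = 0) → x = 0)
    (hcomp : ∀ x y : S, n (mul x y) = n x * n y)
    (hassoc : ∀ x y z : S, polar n (mul x y) z = polar n x (mul y z))
    {G : Type*} [Group G] [DecidableEq G]
    (A : G → Submodule k S)
    (hdecomp : DirectSum.IsInternal A)
    (hgrmul : ∀ g h : G, ∀ x ∈ A g, ∀ y ∈ A h, mul x y ∈ A (g * h)) :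
    (∀ g h : G, h ≠ g⁻¹ → ∀ x ∈ A g, ∀ y ∈ A h, polar n x y = 0) ∧
    (∀ g h : G, A g ≠ ⊥ → A h ≠ ⊥ → g * h = h * g) ∧
    (Subgroup.closure {g : G | A g ≠ ⊥} = ⊤ → ∀ a b : G, a * b = b * a) := by
  classical
  have hpolar : ∀ a b : S, polar n a b = n (a + b) - n a - n b := fun a b => rfl
  -- linearized composition law
  have hcomp' : ∀ x y z : S, polar n (mul x y) (mul x z) = n x * polar n y z := by
    intro x y z
    rw [hpolar, hpolar, ← map_add (mul x), hcomp, hcomp, hcomp]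
    ring
  -- key identity (x*y)*x = n(x) y
  have key : ∀ x y : S, mul (mul x y) x = n x • y := by
    intro x y
    have h : ∀ z, polar n (mul (mul x y) x - n x • y) z = 0 := by
      intro z
      rw [polar_sub_left, hassoc, hcomp', polar_smul_left]
      simp [smul_eq_mul]
    exact sub_eq_zero.mp (hnondeg _ h)
  -- linearization of the key identity
  have L1 : ∀ x y u : S, mul (mul x u) y + mul (mul y u) x = polar n x y • u := by
    intro x y u
    have h := key (x + y) u
    simp only [map_add, LinearMap.add_apply] at h
    rw [key x u, key y u] at h
    have hn : n (x + y) = n x + n y + polar n x y := by rw [hpolar]; ring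
    rw [hn, add_smul, add_smul] at h
    linear_combination (norm := module) h
  -- direct sum facts
  have hind := hdecomp.submodule_iSupIndep
  have htop := hdecomp.submodule_iSup_eq_top
  -- vanishing principle: an element of A g that is a sum of elements of A g₁, A g₂
  -- with g ≠ g₁ and g ≠ g₂ must be zero
  have hvanish : ∀ (g g₁ g₂ : G), g ≠ g₁ → g ≠ g₂ → ∀ v ∈ A g,
      ∀ v₁ ∈ A g₁, ∀ v₂ ∈ A g₂, v = v₁ + v₂ → v = 0 := by
    intro g g₁ g₂ h1 h2 v hv v₁ hv₁ v₂ hv₂ hsum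
    have hmem : v ∈ (⨆ (j : G) (_ : j ≠ g), A j) := by
      rw [hsum]
      exact Submodule.add_mem _
        (Submodule.mem_iSup_of_mem g₁ (Submodule.mem_iSup_of_mem (Ne.symm h1) hv₁))
        (Submodule.mem_iSup_of_mem g₂ (Submodule.mem_iSup_of_mem (Ne.symm h2) hv₂))
    have := (hind g).eq_bot ▸ Submodule.mem_inf.mpr ⟨hv, hmem⟩
    simpa using this
  -- part (a)
  have parta : ∀ g h : G, h ≠ g⁻¹ → ∀ x ∈ A g, ∀ y ∈ A h, polar n x y = 0 := by
    intro g h hne x hx y hy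
    have heq : polar n x y • x = mul (mul x x) y + mul (mul y x) x := (L1 x y x).symm
    have h1 : g ≠ g * g * h := by
      intro hc
      apply hne
      calc h = (g * g)⁻¹ * (g * g * h) := by group
        _ = (g * g)⁻¹ * g := by rw [← hc]
        _ = g⁻¹ := by group
    have h2 : g ≠ h * g * g := by
      intro hc
      apply hne
      calc h = h * g * g * (g * g)⁻¹ := by group
        _ = g * (g * g)⁻¹ := by rw [← hc]
        _ = g⁻¹ := by group
    have hz : polar n x y • x = 0 :=
      hvanish g (g * g * h) (h * g * g) h1 h2 _ (Submodule.smul_mem _ _ hx)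
        _ (hgrmul (g * g) h _ (hgrmul g g x hx x hx) y hy)
        _ (hgrmul (h * g) g _ (hgrmul h g y hy x hx) x hx) heq
    rcases smul_eq_zero.mp hz with hc | hc
    · exact hc
    · rw [hc]
      exact polar_zero_left n y
  -- part (b)
  have partb : ∀ g h : G, A g ≠ ⊥ → A h ≠ ⊥ → g * h = h * g := by
    intro g h hAg hAh
    obtain ⟨x, hx, hx0⟩ := Submodule.exists_mem_ne_zero_of_ne_bot hAg
    obtain ⟨u, hu, hu0⟩ := Submodule.exists_mem_ne_zero_of_ne_bot hAh
    -- find y in A g⁻¹ pairing nontrivially with x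
    have hex : ∃ y ∈ A g⁻¹, polar n x y ≠ 0 := by
      by_contra hcon
      push_neg at hcon
      apply hx0
      apply hnondeg
      intro z
      have hker : ∀ m : G, A m ≤ LinearMap.ker (n.polarBilin x) := by
        intro m y hy
        simp only [LinearMap.mem_ker, polarBilin_apply_apply]
        by_cases hm : m = g⁻¹
        · exact hcon y (hm ▸ hy)
        · exact parta g m hm x hx y hy
      have : (⊤ : Submodule k S) ≤ LinearMap.ker (n.polarBilin x) := by
        rw [← htop]
        exact iSup_le hker
      have hz := this (Submodule.mem_top (x := z))
      simpa only [LinearMap.mem_ker, polarBilin_apply_apply] using hz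
    obtain ⟨y, hy, hxy⟩ := hex
    have heq : polar n x y • u = mul (mul x u) y + mul (mul y u) x := (L1 x y u).symm
    by_contra hcomm
    have h1 : h ≠ g * h * g⁻¹ := by
      intro hc
      apply hcomm
      calc g * h = g * h * g⁻¹ * g := by group
        _ = h * g := by rw [← hc]
    have h2 : h ≠ g⁻¹ * h * g := by
      intro hc
      apply hcomm
      have hthis : h * g = g * (g⁻¹ * h * g) := by group
      rw [← hc] at hthis
      exact hthis.symm
    have hz : polar n x y • u = 0 :=
      hvanish h (g * h * g⁻¹) (g⁻¹ * h * g) h1 h2 _ (Submodule.smul_mem _ _ hu)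
        _ (hgrmul (g * h) g⁻¹ _ (hgrmul g h x hx u hu) y hy)
        _ (hgrmul (g⁻¹ * h) g _ (hgrmul g⁻¹ h y hy u hu) x hx) heq
    rcases smul_eq_zero.mp hz with hc | hc
    · exact hxy hc
    · exact hu0 hc
  refine ⟨parta, partb, ?_⟩
  -- part (c)
  intro hclo a b
  set Ssup : Set G := {g : G | A g ≠ ⊥} with hS
  have hcent : Subgroup.closure Ssup ≤ Subgroup.centralizer Ssup := by
    rw [Subgroup.closure_le]
    intro s hs
    rw [SetLike.mem_coe, Subgroup.mem_centralizer_iff]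
    intro t ht
    exact partb t s ht hs
  have hcenter : ∀ s ∈ Ssup, s ∈ Subgroup.center G := by
    intro s hs
    rw [Subgroup.mem_center_iff]
    intro g
    have : g ∈ Subgroup.centralizer Ssup := hcent (hclo ▸ Subgroup.mem_top g)
    exact (Subgroup.mem_centralizer_iff.mp this s hs).symm
  have : Subgroup.closure Ssup ≤ Subgroup.center G := by
    rw [Subgroup.closure_le]
    exact hcenter
  have hb : b ∈ Subgroup.center G := this (hclo ▸ Subgroup.mem_top b)
  exact Subgroup.mem_center_iff.mp hb a
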